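/- Let n, k ∈ ℕ with k < n, let H ⊆ ℝ with |H| ≥ n+1, and let f : H → ℝ. Suppose there exists ℓ ∈ {0, …, k} such that for each k-tuple x₁ < … < x_k in H, the function x ↦ [x₁, …, x_k, x; f] (classical divided difference) is (n−k)-monotone on H ∩ (−∞, x₁) if ℓ = 0, on H ∩ (x_ℓ, x_{ℓ+1}) if 0 < ℓ < k, and on H ∩ (x_k, +∞) if ℓ = k. Then f is n-monotone on H. -/

import Mathlib

/-- `Φ_ω(x₁,…,x_m) = det(ω_i(x_j))`. -/
noncomputable def Phi {m : ℕ} (ω : Fin m → ℝ → ℝ) (x : Fin m → ℝ) : ℝ :=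
  Matrix.det (Matrix.of fun i j => ω i (x j))

/-- `ω` is an `m`-dimensional positive Chebyshev system over `H`. -/
def IsPosChebyshev {m : ℕ} (ω : Fin m → ℝ → ℝ) (H : Set ℝ) : Prop :=
  ∀ x : Fin m → ℝ, (∀ i, x i ∈ H) → StrictMono x → 0 < Phi ω x

/-- `f` is convex with respect to the `m`-dimensional system `ω` on `S`. -/
def IsConvexWRT {m : ℕ} (ω : Fin m → ℝ → ℝ) (S : Set ℝ) (f : ℝ → ℝ) : Prop :=
  ∀ x : Fin (m + 1) → ℝ, (∀ i, x i ∈ S) → StrictMono x → 0 ≤ Phi (Fin.snoc ω f) x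

/-- The generalized divided difference `[x₁,…,x_k; f]_{ω⟨k⟩}`:
the numerator replaces the last function `ω_k` by `f`. -/
noncomputable def divDiff {k : ℕ} (ω : Fin k → ℝ → ℝ) (f : ℝ → ℝ) (x : Fin k → ℝ) : ℝ :=
  Phi (fun i => if (i : ℕ) + 1 = k then f else ω i) x / Phi ω x

open Finset Polynomial

/- ### Auxiliary machinery -/

lemma coeff_basis_top {F : Type*} [Field F] {ι : Type*} [DecidableEq ι]
    {s : Finset ι} {v : ι → F} {i : ι} (hi : i ∈ s) :
    (Lagrange.basis s v i).coeff (#s - 1) = ∏ j ∈ s.erase i, (v i - v j)⁻¹ := by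
  have hb : Lagrange.basis s v i =
      C (∏ j ∈ s.erase i, (v i - v j)⁻¹) * Lagrange.nodal (s.erase i) v := by
    simp_rw [Lagrange.basis, Lagrange.basisDivisor, prod_mul_distrib, map_prod, Lagrange.nodal]
  rw [hb, coeff_C_mul]
  have hdeg : (Lagrange.nodal (s.erase i) v).natDegree = #s - 1 := by
    rw [Lagrange.natDegree_nodal, card_erase_of_mem hi]
  rw [← hdeg, (Lagrange.nodal_monic).coeff_natDegree, mul_one]

lemma coeff_interpolate_top {F : Type*} [Field F] {ι : Type*} [DecidableEq ι]
    {s : Finset ι} {v : ι → F} (r : ι → F) :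
    (Lagrange.interpolate s v r).coeff (#s - 1)
      = ∑ i ∈ s, r i * ∏ j ∈ s.erase i, (v i - v j)⁻¹ := by
  rw [Lagrange.interpolate_apply, finset_sum_coeff]
  exact sum_congr rfl fun i hi => by rw [coeff_C_mul, coeff_basis_top hi]

/-- Lemma A: the determinant `Φ_{(1,…,t^{m-1},f)}` equals the Vandermonde determinant
times the symmetric divided-difference formula. -/
lemma phi_snoc_pow (m : ℕ) (f : ℝ → ℝ) (x : Fin (m+1) → ℝ) (hx : Function.Injective x) :
    Phi (Fin.snoc (fun i : Fin m => fun t : ℝ => t ^ (i : ℕ)) f) x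
      = (∏ i : Fin (m+1), ∏ j ∈ Ioi i, (x j - x i))
        * ∑ j : Fin (m+1), f (x j) * ∏ i ∈ univ.erase j, (x j - x i)⁻¹ := by
  classical
  set Vt : Matrix (Fin (m+1)) (Fin (m+1)) ℝ := Matrix.of fun i j => x j ^ (i : ℕ) with hVt
  set p : Polynomial ℝ := Lagrange.interpolate univ x (fun j => f (x j)) with hp
  have hinj : Set.InjOn x ↑(univ : Finset (Fin (m+1))) := Function.Injective.injOn hx
  have hdeg : p.natDegree < m + 1 := by
    rcases eq_or_ne p 0 with h | h
    · simp [h]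
    · rw [Polynomial.natDegree_lt_iff_degree_lt h]
      exact_mod_cast (by simpa [hp] using Lagrange.degree_interpolate_lt (fun j => f (x j)) hinj)
  have heval : ∀ j, f (x j) = ∑ k : Fin (m+1), p.coeff (k : ℕ) • Vt k j := by
    intro j
    have h1 : p.eval (x j) = f (x j) := Lagrange.eval_interpolate_at_node _ hinj (mem_univ j)
    rw [← h1, eval_eq_sum_range' hdeg, ← Fin.sum_univ_eq_sum_range]
    simp [hVt, Matrix.of_apply]
  have hM : (Matrix.of fun i j =>
        (Fin.snoc (fun i : Fin m => fun t : ℝ => t ^ (i : ℕ)) f : Fin (m+1) → ℝ → ℝ) i (x j))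
      = Vt.updateRow (Fin.last m) (fun j => ∑ k : Fin (m+1), p.coeff (k : ℕ) • Vt k j) := by
    ext i j
    refine Fin.lastCases ?_ (fun i => ?_) i
    · rw [Matrix.updateRow_self]
      simpa [smul_eq_mul] using heval j
    · rw [Matrix.updateRow_ne (Fin.castSucc_lt_last i).ne]
      simp [Fin.snoc_castSucc, hVt]
  have hrow : (fun j => ∑ k : Fin (m+1), p.coeff (k : ℕ) • Vt k j)
      = ∑ k : Fin (m+1), p.coeff (k : ℕ) • Vt k := by
    ext j; simp [Finset.sum_apply]
  have hdet : Phi (Fin.snoc (fun i : Fin m => fun t : ℝ => t ^ (i : ℕ)) f) x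
      = p.coeff m * Vt.det := by
    rw [Phi, hM, hrow, Matrix.det_updateRow_sum]
    simp [Fin.val_last]
  have hVdet : Vt.det = ∏ i : Fin (m+1), ∏ j ∈ Ioi i, (x j - x i) := by
    have : Vt = (Matrix.vandermonde x).transpose := by
      ext i j; simp [hVt, Matrix.vandermonde]
    rw [this, Matrix.det_transpose, Matrix.det_vandermonde]
  have hcoeff : p.coeff m = ∑ j : Fin (m+1), f (x j) * ∏ i ∈ univ.erase j, (x j - x i)⁻¹ := by
    have := coeff_interpolate_top (s := (univ : Finset (Fin (m+1)))) (v := x) (fun j => f (x j))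
    rw [card_univ, Fintype.card_fin] at this
    exact this
  rw [hdet, hVdet, hcoeff, mul_comm]

/-- `Φ` of the pure power system is the (transposed-)Vandermonde determinant. -/
lemma phi_pow (r : ℕ) (y : Fin r → ℝ) :
    Phi (fun i : Fin r => fun t : ℝ => t ^ (i : ℕ)) y
      = ∏ i : Fin r, ∏ j ∈ Ioi i, (y j - y i) := by
  have : (Matrix.of fun i j : Fin r => y j ^ (i : ℕ)) = (Matrix.vandermonde y).transpose := by
    ext i j; simp [Matrix.vandermonde]
  rw [Phi, this, Matrix.det_transpose, Matrix.det_vandermonde]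

lemma vand_pos {r : ℕ} {y : Fin r → ℝ} (hy : StrictMono y) :
    0 < ∏ i : Fin r, ∏ j ∈ Ioi i, (y j - y i) :=
  prod_pos fun i _ => prod_pos fun j hj => sub_pos.mpr (hy (mem_Ioi.mp hj))

lemma vand_ne_zero {r : ℕ} {y : Fin r → ℝ} (hy : Function.Injective y) :
    (∏ i : Fin r, ∏ j ∈ Ioi i, (y j - y i)) ≠ 0 :=
  prod_ne_zero_iff.mpr fun i _ => prod_ne_zero_iff.mpr fun j hj =>
    sub_ne_zero_of_ne fun h => (mem_Ioi.mp hj).ne' (hy h)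

/-- The symmetric divided difference over a finite set of nodes. -/
noncomputable def ddF (f : ℝ → ℝ) (s : Finset ℝ) : ℝ :=
  ∑ a ∈ s, f a * ∏ b ∈ s.erase a, (a - b)⁻¹

lemma ddT_eq_ddF {r : ℕ} (f : ℝ → ℝ) (x : Fin r → ℝ) (hx : Function.Injective x) :
    ∑ j : Fin r, f (x j) * ∏ i ∈ univ.erase j, (x j - x i)⁻¹
      = ddF f (Finset.image x univ) := by
  classical
  rw [ddF, sum_image (fun a _ b _ h => hx h)]
  refine sum_congr rfl fun j _ => ?_
  congr 1
  rw [← Finset.image_erase hx, prod_image (fun a _ b _ h => hx h)]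

lemma partial_fraction (t : Finset ℝ) (ht : t.Nonempty) (c : ℝ) (hc : c ∉ t) :
    ∑ a ∈ t, (c - a)⁻¹ * ∏ b ∈ t.erase a, (a - b)⁻¹ = ∏ a ∈ t, (c - a)⁻¹ := by
  classical
  have h1 : ∑ a ∈ t, Lagrange.basis t (id : ℝ → ℝ) a = 1 :=
    Lagrange.sum_basis (Function.injective_id.injOn) ht
  have h2 : ∑ a ∈ t, ∏ b ∈ t.erase a, ((a - b)⁻¹ * (c - b)) = 1 := by
    have := congrArg (eval c) h1
    rw [eval_finset_sum, eval_one] at this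
    rw [← this]
    refine sum_congr rfl fun a _ => ?_
    rw [Lagrange.basis, eval_prod]
    exact prod_congr rfl fun b _ => by simp [Lagrange.basisDivisor, mul_comm]
  calc ∑ a ∈ t, (c - a)⁻¹ * ∏ b ∈ t.erase a, (a - b)⁻¹
      = (∏ a ∈ t, (c - a)⁻¹) * ∑ a ∈ t, ∏ b ∈ t.erase a, ((a - b)⁻¹ * (c - b)) := by
        rw [mul_sum]
        refine sum_congr rfl fun a ha => ?_
        rw [← Finset.mul_prod_erase t (fun a' => (c - a')⁻¹) ha, prod_mul_distrib]
        have hPR : (∏ x ∈ t.erase a, (c - x)⁻¹) * ∏ x ∈ t.erase a, (c - x) = 1 := by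
          rw [← prod_mul_distrib]
          exact prod_eq_one fun b hb =>
            inv_mul_cancel₀ (sub_ne_zero_of_ne fun h => hc (h ▸ (mem_erase.mp hb).2))
        linear_combination (-((c - a)⁻¹ * ∏ x ∈ t.erase a, (a - x)⁻¹)) * hPR
    _ = ∏ a ∈ t, (c - a)⁻¹ := by rw [h2, mul_one]

/-- Lemma B: composition of symmetric divided differences. -/
lemma ddF_comp (f : ℝ → ℝ) (s t : Finset ℝ) (hd : Disjoint s t) (ht : t.Nonempty) :
    ddF (fun y => ddF f (insert y s)) t = ddF f (s ∪ t) := by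
  classical
  have hnots : ∀ a ∈ t, a ∉ s := fun a ha hs => (Finset.disjoint_left.mp hd) hs ha
  have hnott : ∀ c ∈ s, c ∉ t := fun c hc ht' => (Finset.disjoint_left.mp hd) hc ht'
  have hexp : ∀ a ∈ t, ddF f (insert a s)
      = f a * ∏ b ∈ s, (a - b)⁻¹
        + ∑ c ∈ s, f c * ((c - a)⁻¹ * ∏ b ∈ s.erase c, (c - b)⁻¹) := by
    intro a ha
    rw [ddF, sum_insert (hnots a ha), erase_insert (hnots a ha)]
    congr 1
    refine sum_congr rfl fun c hc => ?_
    have hca : a ≠ c := fun h => hnots a ha (h ▸ hc)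
    rw [Finset.erase_insert_of_ne hca, prod_insert (fun h => hnots a ha (mem_of_mem_erase h))]
  calc ddF (fun y => ddF f (insert y s)) t
      = ∑ a ∈ t, (f a * ∏ b ∈ s, (a - b)⁻¹
          + ∑ c ∈ s, f c * ((c - a)⁻¹ * ∏ b ∈ s.erase c, (c - b)⁻¹))
            * ∏ b ∈ t.erase a, (a - b)⁻¹ := by
        rw [ddF]
        exact sum_congr rfl fun a ha => by rw [hexp a ha]
    _ = (∑ c ∈ s, f c * ((∏ b ∈ s.erase c, (c - b)⁻¹) *
              ∑ a ∈ t, (c - a)⁻¹ * ∏ b ∈ t.erase a, (a - b)⁻¹))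
          + ∑ a ∈ t, f a * ((∏ b ∈ s, (a - b)⁻¹) * ∏ b ∈ t.erase a, (a - b)⁻¹) := by
        simp_rw [add_mul]
        rw [sum_add_distrib, add_comm]
        congr 1
        · calc ∑ a ∈ t, (∑ c ∈ s, f c * ((c - a)⁻¹ * ∏ b ∈ s.erase c, (c - b)⁻¹))
                  * ∏ b ∈ t.erase a, (a - b)⁻¹
              = ∑ a ∈ t, ∑ c ∈ s, f c * ((c - a)⁻¹ * ∏ b ∈ s.erase c, (c - b)⁻¹)
                  * ∏ b ∈ t.erase a, (a - b)⁻¹ := by simp_rw [sum_mul]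
            _ = ∑ c ∈ s, ∑ a ∈ t, f c * ((c - a)⁻¹ * ∏ b ∈ s.erase c, (c - b)⁻¹)
                  * ∏ b ∈ t.erase a, (a - b)⁻¹ := sum_comm
            _ = _ := by
                refine sum_congr rfl fun c hc => ?_
                rw [mul_sum, mul_sum]
                exact sum_congr rfl fun a ha => by ring
        · exact sum_congr rfl fun a ha => by ring
    _ = ddF f (s ∪ t) := by
        rw [ddF, sum_union hd]
        congr 1
        · refine sum_congr rfl fun c hc => ?_
          rw [partial_fraction t ht c (hnott c hc), Finset.erase_union_distrib,
            Finset.erase_eq_of_notMem (hnott c hc),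
            prod_union (Finset.disjoint_of_subset_left (erase_subset _ _) hd)]
        · refine sum_congr rfl fun a ha => ?_
          rw [Finset.erase_union_distrib, Finset.erase_eq_of_notMem (hnots a ha),
            prod_union (Finset.disjoint_of_subset_right (erase_subset _ _) hd)]

lemma snoc_injective {r : ℕ} {x : Fin r → ℝ} (hx : Function.Injective x) {y : ℝ}
    (hy : ∀ i, x i ≠ y) : Function.Injective (Fin.snoc x y : Fin (r+1) → ℝ) := by
  intro a b h
  rcases Fin.eq_castSucc_or_eq_last a with ⟨a', rfl⟩ | rfl <;>
    rcases Fin.eq_castSucc_or_eq_last b with ⟨b', rfl⟩ | rfl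
  · simp only [Fin.snoc_castSucc] at h
    exact congrArg _ (hx h)
  · simp only [Fin.snoc_castSucc, Fin.snoc_last] at h
    exact absurd h (hy a')
  · simp only [Fin.snoc_castSucc, Fin.snoc_last] at h
    exact absurd h.symm (hy b')
  · rfl

lemma image_snoc {r : ℕ} (x : Fin r → ℝ) (y : ℝ) :
    Finset.image (Fin.snoc x y : Fin (r+1) → ℝ) univ
      = insert y (Finset.image x univ) := by
  ext a
  simp only [mem_image, mem_insert, mem_univ, true_and]
  constructor
  · rintro ⟨i, rfl⟩
    rcases Fin.eq_castSucc_or_eq_last i with ⟨i', rfl⟩ | rfl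
    · exact Or.inr ⟨i', by simp⟩
    · exact Or.inl (by simp)
  · rintro (rfl | ⟨i, -, rfl⟩)
    · exact ⟨Fin.last r, by simp⟩
    · exact ⟨i.castSucc, by simp⟩

/-- The if-then-else numerator system of `divDiff` is a `snoc`. -/
lemma iffun_eq (k : ℕ) (f : ℝ → ℝ) :
    (fun i : Fin (k+1) => if (i : ℕ) + 1 = k + 1 then f else fun t : ℝ => t ^ (i : ℕ))
      = Fin.snoc (fun i : Fin k => fun t : ℝ => t ^ (i : ℕ)) f := by
  funext i
  rcases Fin.eq_castSucc_or_eq_last i with ⟨i', rfl⟩ | rfl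
  · rw [if_neg (by simpa using i'.isLt.ne), Fin.snoc_castSucc]
    simp
  · rw [if_pos (by simp), Fin.snoc_last]

/-- Corollary 2, (iii) ⇒ (i): if there exists `ℓ ∈ {0,…,k}` such that, for each
`x₁ < … < x_k` in `H`, the classical divided difference function `x ↦ [x₁,…,x_k,x; f]` is
`(n-k)`-monotone on `H ∩ (-∞, x₁)` if `ℓ = 0`, on `H ∩ (x_ℓ, x_{ℓ+1})` if `0 < ℓ < k`, and
on `H ∩ (x_k, ∞)` if `ℓ = k` (the three cases are captured uniformly by the set
`{y | x_i < y for i ≤ ℓ and y < x_i for i > ℓ}`), then `f` is `n`-monotone on `H`. -/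
theorem divided_difference_monotone_implies_n_monotone (n k : ℕ) (hk : k < n) (H : Set ℝ)
    (hH : n + 1 ≤ H.ncard ∨ H.Infinite) (f : ℝ → ℝ)
    (hyp : ∃ ℓ : ℕ, ℓ ≤ k ∧
      ∀ x : Fin k → ℝ, (∀ i, x i ∈ H) → StrictMono x →
        IsConvexWRT (fun i : Fin (n - k) => fun t : ℝ => t ^ (i : ℕ))
          (H ∩ {y : ℝ | (∀ i : Fin k, (i : ℕ) < ℓ → x i < y) ∧
            (∀ i : Fin k, ℓ ≤ (i : ℕ) → y < x i)})
          (fun y : ℝ =>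
            divDiff (fun i : Fin (k + 1) => fun t : ℝ => t ^ (i : ℕ)) f (Fin.snoc x y))) :
    IsConvexWRT (fun i : Fin n => fun t : ℝ => t ^ (i : ℕ)) H f := by
  classical
  obtain ⟨ℓ, hℓk, hmain⟩ := hyp
  intro z hzH hz
  -- index map for the outer `k` points
  set ix : Fin k → ℕ := fun i => if (i : ℕ) < ℓ then (i : ℕ) else (i : ℕ) + (n + 1 - k)
    with hix_def
  have hix1 : ∀ i : Fin k, (i : ℕ) < ℓ → ix i = (i : ℕ) := fun i h => by
    simp only [hix_def, if_pos h]
  have hix2 : ∀ i : Fin k, ℓ ≤ (i : ℕ) → ix i = (i : ℕ) + (n + 1 - k) := fun i h => by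
    simp only [hix_def, if_neg (not_lt.mpr h)]
  have hix_lt : ∀ i : Fin k, ix i < n + 1 := by
    intro i
    have hi := i.isLt
    rcases lt_or_ge (i : ℕ) ℓ with h | h
    · rw [hix1 i h]; omega
    · rw [hix2 i h]; omega
  set x : Fin k → ℝ := fun i => z ⟨ix i, hix_lt i⟩ with hx_def
  set w : Fin (n - k + 1) → ℝ := fun j => z ⟨ℓ + (j : ℕ), by have := j.isLt; omega⟩ with hw_def
  have hzval : ∀ (a b : Fin (n + 1)), (a : ℕ) < (b : ℕ) → z a < z b := fun a b h => hz h
  have hx_mem : ∀ i, x i ∈ H := fun i => hzH _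
  have hw_mem : ∀ j, w j ∈ H := fun j => hzH _
  have hx_mono : StrictMono x := by
    intro i i' h
    have h' : (i : ℕ) < (i' : ℕ) := h
    refine hzval _ _ ?_
    show ix i < ix i'
    rcases lt_or_ge (i : ℕ) ℓ with h1 | h1 <;> rcases lt_or_ge (i' : ℕ) ℓ with h2 | h2
    · rw [hix1 i h1, hix1 i' h2]; omega
    · rw [hix1 i h1, hix2 i' h2]; omega
    · omega
    · rw [hix2 i h1, hix2 i' h2]; omega
  have hw_mono : StrictMono w := by
    intro j j' h
    have h' : (j : ℕ) < (j' : ℕ) := h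
    exact hzval _ _ (by show ℓ + (j : ℕ) < ℓ + (j' : ℕ); omega)
  have hsep1 : ∀ (i : Fin k) (j : Fin (n - k + 1)), (i : ℕ) < ℓ → x i < w j := by
    intro i j h
    refine hzval _ _ ?_
    show ix i < ℓ + (j : ℕ)
    rw [hix1 i h]; omega
  have hsep2 : ∀ (i : Fin k) (j : Fin (n - k + 1)), ℓ ≤ (i : ℕ) → w j < x i := by
    intro i j h
    refine hzval _ _ ?_
    show ℓ + (j : ℕ) < ix i
    have := j.isLt
    rw [hix2 i h]; omega
  have hw_in : ∀ j, w j ∈ H ∩ {y : ℝ | (∀ i : Fin k, (i : ℕ) < ℓ → x i < y) ∧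
      (∀ i : Fin k, ℓ ≤ (i : ℕ) → y < x i)} := by
    intro j
    exact ⟨hw_mem j, fun i h => hsep1 i j h, fun i h => hsep2 i j h⟩
  have hC := hmain x hx_mem hx_mono w hw_in hw_mono
  set S : Finset ℝ := Finset.image x univ with hS_def
  set G : ℝ → ℝ := fun y => ddF f (insert y S) with hG_def
  -- the divided difference function agrees with `G` at the points of `w`
  have hg : ∀ j : Fin (n - k + 1),
      divDiff (fun i : Fin (k + 1) => fun t : ℝ => t ^ (i : ℕ)) f (Fin.snoc x (w j))
        = G (w j) := by
    intro j
    have hysep : ∀ i, x i ≠ w j := by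
      intro i
      rcases lt_or_ge (i : ℕ) ℓ with h | h
      · exact (hsep1 i j h).ne
      · exact (hsep2 i j h).ne'
    have hinj : Function.Injective (Fin.snoc x (w j) : Fin (k + 1) → ℝ) :=
      snoc_injective hx_mono.injective hysep
    rw [divDiff, iffun_eq, phi_snoc_pow k f _ hinj, phi_pow (k + 1),
      mul_div_cancel_left₀ _ (vand_ne_zero hinj), ddT_eq_ddF _ _ hinj, image_snoc]
  -- turn the hypothesis inequality into nonnegativity of the symmetric divided difference
  rw [phi_snoc_pow (n - k) _ w hw_mono.injective] at hC
  have hSig : 0 ≤ ∑ j : Fin (n - k + 1),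
      divDiff (fun i : Fin (k + 1) => fun t : ℝ => t ^ (i : ℕ)) f (Fin.snoc x (w j))
        * ∏ i ∈ univ.erase j, (w j - w i)⁻¹ := by
    have h := div_nonneg hC (vand_pos hw_mono).le
    rwa [mul_div_cancel_left₀ _ (vand_pos hw_mono).ne'] at h
  have hdisj : Disjoint S (Finset.image w univ) := by
    rw [Finset.disjoint_left]
    rintro a ha ha'
    rw [hS_def, mem_image] at ha
    rw [mem_image] at ha'
    obtain ⟨i, -, rfl⟩ := ha
    obtain ⟨j, -, hji⟩ := ha'
    rcases lt_or_ge (i : ℕ) ℓ with h | h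
    · exact absurd hji (hsep1 i j h).ne'
    · exact absurd hji (hsep2 i j h).ne
  have hTne : (Finset.image w univ).Nonempty :=
    ⟨w 0, mem_image.mpr ⟨0, mem_univ _, rfl⟩⟩
  have hST : S ∪ Finset.image w univ = Finset.image z univ := by
    apply Finset.Subset.antisymm
    · apply Finset.union_subset
      · intro a ha
        rw [hS_def, mem_image] at ha
        obtain ⟨i, -, rfl⟩ := ha
        exact mem_image.mpr ⟨_, mem_univ _, rfl⟩
      · intro a ha
        rw [mem_image] at ha
        obtain ⟨j, -, rfl⟩ := ha
        exact mem_image.mpr ⟨_, mem_univ _, rfl⟩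
    · intro a ha
      rw [mem_image] at ha
      obtain ⟨b, -, rfl⟩ := ha
      rw [Finset.mem_union]
      have hb := b.isLt
      rcases lt_or_ge (b : ℕ) ℓ with h1 | h1
      · refine Or.inl (mem_image.mpr ⟨⟨(b : ℕ), by omega⟩, mem_univ _, ?_⟩)
        rw [hx_def]
        exact congrArg z (Fin.ext (by simp [hix1 ⟨(b : ℕ), by omega⟩ h1]))
      · rcases le_or_gt (b : ℕ) (ℓ + (n - k)) with h2 | h2
        · refine Or.inr (mem_image.mpr ⟨⟨(b : ℕ) - ℓ, by omega⟩, mem_univ _, ?_⟩)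
          rw [hw_def]
          exact congrArg z (Fin.ext (by simp; omega))
        · refine Or.inl (mem_image.mpr ⟨⟨(b : ℕ) - (n + 1 - k), by omega⟩, mem_univ _, ?_⟩)
          rw [hx_def]
          refine congrArg z (Fin.ext ?_)
          have : ℓ ≤ ((⟨(b : ℕ) - (n + 1 - k), by omega⟩ : Fin k) : ℕ) := by simp; omega
          simp [hix2 _ this]
          omega
  -- chain of identities
  have hkey : (∑ j : Fin (n - k + 1),
        divDiff (fun i : Fin (k + 1) => fun t : ℝ => t ^ (i : ℕ)) f (Fin.snoc x (w j))
          * ∏ i ∈ univ.erase j, (w j - w i)⁻¹)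
      = ∑ j : Fin (n + 1), f (z j) * ∏ i ∈ univ.erase j, (z j - z i)⁻¹ := by
    calc (∑ j : Fin (n - k + 1),
          divDiff (fun i : Fin (k + 1) => fun t : ℝ => t ^ (i : ℕ)) f (Fin.snoc x (w j))
            * ∏ i ∈ univ.erase j, (w j - w i)⁻¹)
        = ∑ j : Fin (n - k + 1), G (w j) * ∏ i ∈ univ.erase j, (w j - w i)⁻¹ :=
          sum_congr rfl fun j _ => by rw [hg j]
      _ = ddF G (Finset.image w univ) := ddT_eq_ddF G w hw_mono.injective
      _ = ddF f (S ∪ Finset.image w univ) := ddF_comp f S _ hdisj hTne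
      _ = ddF f (Finset.image z univ) := by rw [hST]
      _ = ∑ j : Fin (n + 1), f (z j) * ∏ i ∈ univ.erase j, (z j - z i)⁻¹ :=
          (ddT_eq_ddF f z hz.injective).symm
  rw [phi_snoc_pow n f z hz.injective]
  refine mul_nonneg (vand_pos hz).le ?_
  rw [← hkey]
  exact hSig
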